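/- The symmetric groups {S_n}_{n≥0} with compositions σ ∘_i τ = (1_i ⊞ τ ⊞ 1_{n-i}) · s_i^m(σ) satisfy the shifted operad associativity: for λ ∈ S_l, μ ∈ S_m, ν ∈ S_n and 0 ≤ i ≤ l, 0 ≤ j ≤ m, one has (λ ∘_i μ) ∘_{i+j} ν = λ ∘_i (μ ∘_j ν). -/
import Mathlib


open Equiv

namespace CSGPaper

/-- Transport of a permutation along an equality of index sets. -/
def pcast {a b : ℕ} (h : a = b) (σ : Perm (Fin a)) : Perm (Fin b) :=
  Equiv.permCongr (finCongr h) σ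

/-- Block sum of permutations: `σ` acts on the first `a` points, `τ` on the last `b`. -/
def bsum {a b : ℕ} (σ : Perm (Fin a)) (τ : Perm (Fin b)) : Perm (Fin (a + b)) :=
  Equiv.permCongr finSumFinEquiv (Equiv.sumCongr σ τ)

/-- The degeneracy `s_i` on permutations: duplicate the point `i` in the target and
`σ⁻¹ i` in the source, renumbering order-preservingly. -/
def pdegen {a : ℕ} (i : Fin a) (σ : Perm (Fin a)) : Perm (Fin (a + 1)) :=
  (finSuccEquiv' ((σ.symm i).succ)).trans
    ((Equiv.optionCongr σ).trans (finSuccEquiv' i.succ).symm)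

/-- The face `d_i` on permutations: delete the point `i` in the target and `σ⁻¹ i`
in the source, renumbering order-preservingly. -/
def pface {a : ℕ} (i : Fin (a + 1)) (σ : Perm (Fin (a + 1))) : Perm (Fin a) :=
  Equiv.removeNone ((finSuccEquiv' (σ.symm i)).symm.trans (σ.trans (finSuccEquiv' i)))

/-- The `m`-fold iterated degeneracy at `i` (replacing the point `i` by `m+1` points). -/
def pdegenIter {a : ℕ} (i : Fin a) (σ : Perm (Fin a)) : (m : ℕ) → Perm (Fin (a + m))
  | 0 => σ
  | m + 1 => pdegen (Fin.castLE (Nat.le_add_right a m) i) (pdegenIter i σ m)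

/-- `1_i ⊞ τ ⊞ 1_{n-i}` : the permutation `τ` padded by `i` fixed points on the left
and `n - i` fixed points on the right. -/
def ppad {n m : ℕ} (i : Fin (n + 1)) (τ : Perm (Fin (m + 1))) : Perm (Fin (n + m + 1)) :=
  pcast (show i.val + (m + 1) + (n - i.val) = n + m + 1 by have := i.isLt; omega)
    (bsum (bsum (1 : Perm (Fin i.val)) τ) (1 : Perm (Fin (n - i.val))))

/-- The shifted operadic composition `σ ∘ᵢ τ = (1_i ⊞ τ ⊞ 1_{n-i}) · s_i^m(σ)`. -/
def pcomp {n m : ℕ} (i : Fin (n + 1)) (σ : Perm (Fin (n + 1))) (τ : Perm (Fin (m + 1))) :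
    Perm (Fin (n + m + 1)) :=
  ppad i τ * pcast (show n + 1 + m = n + m + 1 by omega) (pdegenIter i σ m)

def fv {a : ℕ} (σ : Perm (Fin a)) (x : ℕ) : ℕ :=
  if h : x < a then (σ ⟨x, h⟩).val else x

lemma fv_lt {a : ℕ} (σ : Perm (Fin a)) {x : ℕ} (h : x < a) : fv σ x < a := by
  simp [fv, h]

lemma fv_eq_iff {a : ℕ} (σ : Perm (Fin a)) {x y : ℕ} (hx : x < a) (hy : y < a) :
    fv σ x = fv σ y ↔ x = y := by
  simp only [fv, dif_pos hx, dif_pos hy]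
  rw [Fin.val_eq_val, EmbeddingLike.apply_eq_iff_eq, Fin.mk.injEq]

lemma fv_symm_eq {a : ℕ} (σ : Perm (Fin a)) (i : Fin a) {q : ℕ} (hq : q < a)
    (h : fv σ q = i.val) : (σ.symm i).val = q := by
  simp only [fv, dif_pos hq] at h
  have : σ ⟨q, hq⟩ = i := Fin.ext h
  rw [← this, symm_apply_apply]

lemma pcast_val {a b : ℕ} (h : a = b) (σ : Perm (Fin a)) (x : Fin b) :
    (pcast h σ x).val = fv σ x.val := by
  subst h
  simp [pcast, fv, x.isLt, permCongr_apply]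

lemma bsum_val {a b : ℕ} (σ : Perm (Fin a)) (τ : Perm (Fin b)) (x : Fin (a + b)) :
    (bsum σ τ x).val = if x.val < a then fv σ x.val else a + fv τ (x.val - a) := by
  rcases Nat.lt_or_ge x.val a with h | h
  · rw [if_pos h]
    have : x = finSumFinEquiv (Sum.inl ⟨x.val, h⟩) := by
      apply Fin.ext; simp
    simp only [bsum, permCongr_apply]
    rw [this, Equiv.symm_apply_apply]
    simp [fv, h]
  · rw [if_neg (by omega)]
    have hb : x.val - a < b := by have := x.isLt; omega
    have : x = finSumFinEquiv (Sum.inr ⟨x.val - a, hb⟩) := by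
      apply Fin.ext; simp; omega
    simp only [bsum, permCongr_apply]
    rw [this, Equiv.symm_apply_apply]
    simp [fv, hb]

lemma pdegen_val {b : ℕ} (jj : Fin b) (ρ : Perm (Fin b)) (x : Fin (b + 1)) :
    (pdegen jj ρ x).val =
      if x.val ≤ (ρ.symm jj).val then
        (if fv ρ x.val ≤ jj.val then fv ρ x.val else fv ρ x.val + 1)
      else if x.val = (ρ.symm jj).val + 1 then jj.val + 1
      else (if fv ρ (x.val - 1) ≤ jj.val then fv ρ (x.val - 1) else fv ρ (x.val - 1) + 1) := by
  set q := ρ.symm jj with hq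
  have hqb : q.val < b := q.isLt
  rcases Nat.lt_trichotomy x.val (q.val + 1) with h | h | h
  · -- x ≤ q
    have hxb : x.val < b := by omega
    have hx : x = Fin.castSucc ⟨x.val, hxb⟩ := by apply Fin.ext; simp
    rw [if_pos (by omega : x.val ≤ q.val)]
    rw [show pdegen jj ρ x =
      (finSuccEquiv' jj.succ).symm (Equiv.optionCongr ρ (finSuccEquiv' q.succ x)) from rfl]
    have key : finSuccEquiv' q.succ x = some ⟨x.val, hxb⟩ := by
      conv_lhs => rw [hx]
      exact finSuccEquiv'_below (by simp [Fin.lt_def]; omega)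
    rw [key]
    have hρ : fv ρ x.val = (ρ ⟨x.val, hxb⟩).val := by simp [fv, hxb]
    rcases le_or_gt (fv ρ x.val) jj.val with h2 | h2
    · rw [if_pos h2]
      simp only [optionCongr_apply, Option.map_some]
      rw [finSuccEquiv'_symm_some_below (by simp [Fin.lt_def]; omega)]
      simp [hρ]
    · rw [if_neg (by omega)]
      simp only [optionCongr_apply, Option.map_some]
      rw [finSuccEquiv'_symm_some_above (by simp [Fin.le_def]; omega)]
      simp [hρ]
  · -- x = q + 1
    have hx : x = q.succ := by apply Fin.ext; simpa using h
    rw [if_neg (by omega), if_pos h]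
    rw [show pdegen jj ρ x =
      (finSuccEquiv' jj.succ).symm (Equiv.optionCongr ρ (finSuccEquiv' q.succ x)) from rfl]
    rw [hx, finSuccEquiv'_at]
    simp
  · -- x > q + 1
    have hxb : x.val - 1 < b := by have := x.isLt; omega
    have hx : x = Fin.succ ⟨x.val - 1, hxb⟩ := by apply Fin.ext; simp; omega
    rw [if_neg (by omega), if_neg (by omega)]
    rw [show pdegen jj ρ x =
      (finSuccEquiv' jj.succ).symm (Equiv.optionCongr ρ (finSuccEquiv' q.succ x)) from rfl]
    have key : finSuccEquiv' q.succ x = some ⟨x.val - 1, hxb⟩ := by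
      conv_lhs => rw [hx]
      exact finSuccEquiv'_above (by simp [Fin.le_def]; omega)
    rw [key]
    have hρ : fv ρ (x.val - 1) = (ρ ⟨x.val - 1, hxb⟩).val := by simp [fv, hxb]
    rcases le_or_gt (fv ρ (x.val - 1)) jj.val with h2 | h2
    · rw [if_pos h2]
      simp only [optionCongr_apply, Option.map_some]
      rw [finSuccEquiv'_symm_some_below (by simp [Fin.lt_def]; omega)]
      simp [hρ]
    · rw [if_neg (by omega)]
      simp only [optionCongr_apply, Option.map_some]
      rw [finSuccEquiv'_symm_some_above (by simp [Fin.le_def]; omega)]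
      simp [hρ]

def dIt (m i q : ℕ) (f : ℕ → ℕ) (x : ℕ) : ℕ :=
  if x < q then (if f x < i then f x else f x + m)
  else if x ≤ q + m then i + (x - q)
  else (if f (x - m) < i then f (x - m) else f (x - m) + m)

lemma pdegenIter_val {a : ℕ} (i : Fin a) (σ : Perm (Fin a)) (m : ℕ) (x : Fin (a + m)) :
    (pdegenIter i σ m x).val = dIt m i.val (σ.symm i).val (fv σ) x.val := by
  have hqa : (σ.symm i).val < a := (σ.symm i).isLt
  have hfq : fv σ (σ.symm i).val = i.val := by
    simp [fv, hqa]
  have hne : ∀ y, y < a → y ≠ (σ.symm i).val → fv σ y ≠ i.val := by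
    intro y hy hyq hcon
    exact hyq (fv_symm_eq σ i hy hcon).symm
  induction m with
  | zero =>
    have hxa : x.val < a := x.isLt
    have hfx : fv σ x.val = (pdegenIter i σ 0 x).val := by
      simp [fv, hxa, pdegenIter]
    unfold dIt
    rcases Nat.lt_trichotomy x.val (σ.symm i).val with h | h | h
    · have := hne x.val hxa (by omega)
      split_ifs <;> omega
    · rw [if_neg (by omega), if_pos (by omega)]
      rw [h] at hfx; omega
    · have := hne x.val hxa (by omega)
      have hx0 : x.val - 0 = x.val := by omega
      rw [hx0]
      split_ifs <;> omega
  | succ m ih =>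
    have IH : ∀ y (h : y < a + m), fv (pdegenIter i σ m) y = dIt m i.val (σ.symm i).val (fv σ) y := by
      intro y h
      rw [fv, dif_pos h]
      exact ih ⟨y, h⟩
    have hQ : ((pdegenIter i σ m).symm (Fin.castLE (Nat.le_add_right a m) i)).val
        = (σ.symm i).val := by
      apply fv_symm_eq _ _ (show (σ.symm i).val < a + m by omega)
      rw [IH (σ.symm i).val (by omega)]
      unfold dIt
      rw [if_neg (by omega), if_pos (by omega)]
      simp
    show (pdegen (Fin.castLE (Nat.le_add_right a m) i) (pdegenIter i σ m) x).val = _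
    rw [pdegen_val, hQ, Fin.coe_castLE]
    rcases Nat.lt_trichotomy x.val ((σ.symm i).val + 1) with h | h | h
    · rw [if_pos (by omega), IH x.val (by omega)]
      unfold dIt
      rcases lt_or_ge x.val (σ.symm i).val with h2 | h2
      · have := hne x.val (by omega) (by omega)
        split_ifs <;> omega
      · have hx : x.val = (σ.symm i).val := by omega
        rw [hx]
        split_ifs <;> omega
    · rw [if_neg (by omega), if_pos (by omega)]
      unfold dIt
      split_ifs <;> omega
    · rw [if_neg (by omega), if_neg (by omega), IH (x.val - 1) (by have := x.isLt; omega)]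
      unfold dIt
      have harg : x.val - 1 - m = x.val - (m + 1) := by omega
      rw [harg]
      rcases le_or_gt (x.val - 1) ((σ.symm i).val + m) with h2 | h2
      · split_ifs <;> omega
      · have := hne (x.val - (m + 1)) (by have := x.isLt; omega) (by omega)
        split_ifs <;> omega

def pFun (i m : ℕ) (g : ℕ → ℕ) (x : ℕ) : ℕ :=
  if x < i then x else if x ≤ i + m then i + g (x - i) else x

lemma fv_one {a : ℕ} {x : ℕ} (h : x < a) : fv (1 : Perm (Fin a)) x = x := by
  simp [fv, h]

lemma ppad_val {n m : ℕ} (i : Fin (n + 1)) (τ : Perm (Fin (m + 1))) (x : Fin (n + m + 1)) :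
    (ppad i τ x).val = pFun i.val m (fv τ) x.val := by
  have hi : i.val < n + 1 := i.isLt
  have hx : x.val < n + m + 1 := x.isLt
  rw [show ppad i τ x = pcast (show i.val + (m + 1) + (n - i.val) = n + m + 1 by omega)
    (bsum (bsum (1 : Perm (Fin i.val)) τ) (1 : Perm (Fin (n - i.val)))) x from rfl]
  rw [pcast_val]
  rw [show fv (bsum (bsum (1 : Perm (Fin i.val)) τ) (1 : Perm (Fin (n - i.val)))) x.val
    = ((bsum (bsum (1 : Perm (Fin i.val)) τ) (1 : Perm (Fin (n - i.val))))
        ⟨x.val, by omega⟩).val from by simp [fv, show x.val < i.val + (m+1) + (n - i.val) by omega]]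
  rw [bsum_val]
  unfold pFun
  rcases lt_or_ge x.val (i.val + (m + 1)) with h | h
  · rw [if_pos (by simpa using h)]
    rw [show fv (bsum (1 : Perm (Fin i.val)) τ) x.val
      = ((bsum (1 : Perm (Fin i.val)) τ) ⟨x.val, by omega⟩).val from by
        simp [fv, show x.val < i.val + (m+1) by omega]]
    rw [bsum_val]
    rcases lt_or_ge x.val i.val with h2 | h2
    · rw [if_pos (by simpa using h2), if_pos h2, fv_one h2]
    · rw [if_neg (by simpa using not_lt.mpr h2), if_neg (by omega), if_pos (by omega)]
  · rw [if_neg (by simpa using not_lt.mpr h), if_neg (by omega), if_neg (by omega)]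
    rw [fv_one (by omega)]
    simp only [Fin.val_mk]
    omega

lemma pcomp_val {n m : ℕ} (i : Fin (n + 1)) (σ : Perm (Fin (n + 1))) (τ : Perm (Fin (m + 1)))
    (x : Fin (n + m + 1)) :
    (pcomp i σ τ x).val
      = pFun i.val m (fv τ) (dIt m i.val (σ.symm i).val (fv σ) x.val) := by
  rw [show pcomp i σ τ x = ppad i τ ((pcast (show n + 1 + m = n + m + 1 by omega)
    (pdegenIter i σ m)) x) from rfl]
  rw [ppad_val, pcast_val]
  congr 1
  rw [show fv (pdegenIter i σ m) x.val = ((pdegenIter i σ m) ⟨x.val, by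
    have := x.isLt; omega⟩).val from by simp [fv, show x.val < n + 1 + m from by have := x.isLt; omega]]
  rw [pdegenIter_val]

lemma pcomp_fv {n m : ℕ} (i : Fin (n + 1)) (σ : Perm (Fin (n + 1))) (τ : Perm (Fin (m + 1)))
    {y : ℕ} (h : y < n + m + 1) :
    fv (pcomp i σ τ) y
      = pFun i.val m (fv τ) (dIt m i.val (σ.symm i).val (fv σ) y) := by
  rw [fv, dif_pos h, pcomp_val]

/- evaluation helpers -/

lemma pFun_lt {i m x : ℕ} (g : ℕ → ℕ) (h : x < i) : pFun i m g x = x := by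
  simp [pFun, h]

lemma pFun_add {i m t : ℕ} (g : ℕ → ℕ) (h : t ≤ m) : pFun i m g (i + t) = i + g t := by
  unfold pFun
  rw [if_neg (by omega), if_pos (by omega)]
  congr 2
  omega

lemma pFun_gt {i m x : ℕ} (g : ℕ → ℕ) (h : i + m < x) : pFun i m g x = x := by
  unfold pFun
  rw [if_neg (by omega), if_neg (by omega)]

lemma dIt_lt {m i q x : ℕ} (f : ℕ → ℕ) (h : x < q) :
    dIt m i q f x = if f x < i then f x else f x + m := by
  unfold dIt; rw [if_pos h]

lemma dIt_mid {m i q x : ℕ} (f : ℕ → ℕ) (h1 : q ≤ x) (h2 : x ≤ q + m) :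
    dIt m i q f x = i + (x - q) := by
  unfold dIt; rw [if_neg (by omega), if_pos h2]

lemma dIt_gt {m i q x : ℕ} (f : ℕ → ℕ) (h : q + m < x) :
    dIt m i q f x = if f (x - m) < i then f (x - m) else f (x - m) + m := by
  unfold dIt; rw [if_neg (by omega), if_neg (by omega)]

lemma key (l m n i j q r : ℕ) (fl fm fn : ℕ → ℕ) (F G : ℕ → ℕ)
    (hi : i ≤ l) (hj : j ≤ m) (hq : q ≤ l) (hr : r ≤ m)
    (hflq : fl q = i) (hfmr : fm r = j)
    (hfl : ∀ y, y ≤ l → y ≠ q → fl y ≠ i) (hfm : ∀ y, y ≤ m → y ≠ r → fm y ≠ j)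
    (hF : ∀ y, y ≤ l + m → F y = pFun i m fm (dIt m i q fl y))
    (hG : ∀ z, z ≤ m + n → G z = pFun j n fn (dIt n j r fm z))
    (X : ℕ) (hX : X < l + m + n + 1) :
    pFun (i + j) n fn (dIt n (i + j) (q + r) F X)
      = pFun i (m + n) G (dIt (m + n) i q fl X) := by
  rcases lt_or_ge X (q + r) with hA | hBC
  · -- region A : X < q + r
    rw [dIt_lt F hA, hF X (by omega)]
    rcases lt_or_ge X q with hA1 | hA2
    · -- A1 : X < q
      have hne := hfl X (by omega) (by omega)
      rw [dIt_lt fl hA1]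
      rw [dIt_lt fl hA1] -- RHS occurrence
      rcases lt_or_ge (fl X) i with hlt | hgt
      · rw [if_pos hlt, if_pos hlt, pFun_lt fm hlt,
          if_pos (show fl X < i + j by omega), pFun_lt fn (show fl X < i + j by omega),
          pFun_lt G (show fl X < i by omega)]
      · have hgt' : i < fl X := by omega
        rw [if_neg (show ¬ fl X < i by omega), pFun_gt fm (show i + m < fl X + m by omega),
          if_neg (show ¬ fl X + m < i + j by omega),
          pFun_gt fn (show (i + j) + n < fl X + m + n by omega),
          if_neg (show ¬ fl X < i by omega),
          pFun_gt G (show i + (m + n) < fl X + (m + n) by omega)]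
        omega
    · -- A2 : q ≤ X < q + r
      have hne := hfm (X - q) (by omega) (by omega)
      rw [dIt_mid fl hA2 (by omega), pFun_add fm (by omega)]
      rw [dIt_mid fl hA2 (by omega), pFun_add G (by omega), hG (X - q) (by omega),
        dIt_lt fm (by omega)]
      rcases lt_or_ge (fm (X - q)) j with hlt | hgt
      · rw [if_pos (by omega), pFun_lt fn (by omega), if_pos hlt, pFun_lt fn hlt]
      · rw [if_neg (by omega), pFun_gt fn (by omega), if_neg (by omega), pFun_gt fn (by omega)]
        omega
  · rcases le_or_gt X (q + r + n) with hB | hC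
    · -- region B : q + r ≤ X ≤ q + r + n
      rw [dIt_mid F hBC hB, pFun_add fn (by omega)]
      rw [dIt_mid fl (by omega) (by omega), pFun_add G (by omega), hG (X - q) (by omega),
        dIt_mid fm (by omega) (by omega), pFun_add fn (by omega)]
      have : fn (X - (q + r)) = fn (X - q - r) := by congr 1; omega
      omega
    · -- region C : X > q + r + n
      rw [dIt_gt F hC, hF (X - n) (by omega)]
      rcases le_or_gt (X - n) (q + m) with hC1 | hC2
      · -- C1 : q + r < X - n ≤ q + m
        have hne := hfm (X - n - q) (by omega) (by omega)
        rw [dIt_mid fl (by omega) (by omega), pFun_add fm (by omega)]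
        rw [dIt_mid fl (by omega) (by omega), pFun_add G (by omega), hG (X - q) (by omega),
          dIt_gt fm (by omega)]
        have hbr : fm (X - q - n) = fm (X - n - q) := by congr 1; omega
        rcases lt_or_ge (fm (X - n - q)) j with hlt | hgt
        · rw [if_pos (by omega), pFun_lt fn (by omega), if_pos (by omega), pFun_lt fn (by omega)]
          omega
        · rw [if_neg (by omega), pFun_gt fn (by omega), if_neg (by omega), pFun_gt fn (by omega)]
          omega
      · -- C2 : X - n > q + m
        have hne := hfl (X - n - m) (by omega) (by omega)
        rw [dIt_gt fl (by omega), dIt_gt fl (by omega)]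
        have hbr : fl (X - n - m) = fl (X - (m + n)) := by congr 1; omega
        rcases lt_or_ge (fl (X - n - m)) i with hlt | hgt
        · rw [if_pos hlt, pFun_lt fm hlt,
            if_pos (show fl (X - n - m) < i + j by omega),
            pFun_lt fn (show fl (X - n - m) < i + j by omega),
            if_pos (show fl (X - (m + n)) < i by omega),
            pFun_lt G (show fl (X - (m + n)) < i by omega)]
          omega
        · rw [if_neg (show ¬ fl (X - n - m) < i by omega),
            pFun_gt fm (show i + m < fl (X - n - m) + m by omega),
            if_neg (show ¬ fl (X - n - m) + m < i + j by omega),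
            pFun_gt fn (show (i + j) + n < fl (X - n - m) + m + n by omega),
            if_neg (show ¬ fl (X - (m + n)) < i by omega),
            pFun_gt G (show i + (m + n) < fl (X - (m + n)) + (m + n) by omega)]
          omega

lemma fv_apply_symm {a : ℕ} (σ : Perm (Fin a)) (i : Fin a) : fv σ (σ.symm i).val = i.val := by
  simp [fv, (σ.symm i).isLt]

/-- shifted operad associativity `(λ ∘ᵢ μ) ∘_{i+j} ν = λ ∘ᵢ (μ ∘ⱼ ν)`. -/
theorem pcomp_assoc {l m n : ℕ} (i : Fin (l + 1)) (j : Fin (m + 1))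
    (lam : Perm (Fin (l + 1))) (mu : Perm (Fin (m + 1))) (nu : Perm (Fin (n + 1))) :
    pcast (show l + m + n + 1 = l + (m + n) + 1 by omega)
        (pcomp (⟨i.val + j.val, by have := i.isLt; have := j.isLt; omega⟩ : Fin (l + m + 1))
          (pcomp i lam mu) nu)
      = pcomp i lam (pcomp j mu nu) := by
  have hil : i.val ≤ l := by have := i.isLt; omega
  have hjm : j.val ≤ m := by have := j.isLt; omega
  have hql : (lam.symm i).val ≤ l := by have := (lam.symm i).isLt; omega
  have hqm : (mu.symm j).val ≤ m := by have := (mu.symm j).isLt; omega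
  have hP : ((pcomp i lam mu).symm
        (⟨i.val + j.val, by omega⟩ : Fin (l + m + 1))).val
      = (lam.symm i).val + (mu.symm j).val := by
    apply fv_symm_eq _ _ (show (lam.symm i).val + (mu.symm j).val < l + m + 1 by omega)
    rw [pcomp_fv i lam mu (by omega)]
    rw [dIt_mid (fv lam) (by omega) (by omega)]
    have h1 : (lam.symm i).val + (mu.symm j).val - (lam.symm i).val = (mu.symm j).val := by omega
    rw [h1, pFun_add (fv mu) (by omega), fv_apply_symm]
  apply Equiv.ext
  intro x
  apply Fin.ext
  rw [pcast_val]
  rw [pcomp_fv _ _ _ (show x.val < l + m + n + 1 by have := x.isLt; omega), hP]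
  rw [pcomp_val i lam (pcomp j mu nu) x]
  exact key l m n i.val j.val (lam.symm i).val (mu.symm j).val
    (fv lam) (fv mu) (fv nu) (fv (pcomp i lam mu)) (fv (pcomp j mu nu))
    hil hjm hql hqm
    (fv_apply_symm lam i) (fv_apply_symm mu j)
    (fun y hy hne hcon => hne (fv_symm_eq lam i (by omega) hcon).symm)
    (fun y hy hne hcon => hne (fv_symm_eq mu j (by omega) hcon).symm)
    (fun y hy => pcomp_fv i lam mu (by omega))
    (fun z hz => pcomp_fv j mu nu (by omega))
    x.val (by have := x.isLt; omega)

end CSGPaper
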